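/- Each semi-dual component φ_i of entropy-regularized optimal transport is (n p'_i / η)-smooth with respect to the Euclidean norm: for every i ∈ {1,…,n} and all λ, λ' ∈ ℝⁿ, ‖∇φ_i(λ) − ∇φ_i(λ')‖₂ ≤ (n p'_i / η) ‖λ − λ'‖₂. -/

import Mathlib

open scoped BigOperators
open Real

section OTAux

variable {n : ℕ}

/-- coordinate projection as a CLM on Euclidean space -/
noncomputable def otPj (n : ℕ) (j : Fin n) : EuclideanSpace ℝ (Fin n) →L[ℝ] ℝ :=
  EuclideanSpace.proj j

/-- partition function -/
noncomputable def otZ (η : ℝ) (c : Fin n → ℝ) (x : EuclideanSpace ℝ (Fin n)) : ℝ :=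
  ∑ j, Real.exp ((x j - c j) / η)

/-- softmax -/
noncomputable def otS (η : ℝ) (c : Fin n → ℝ) (x : EuclideanSpace ℝ (Fin n)) (k : Fin n) : ℝ :=
  Real.exp ((x k - c k) / η) / otZ η c x

lemma otZ_pos (η : ℝ) (c : Fin n → ℝ) (hn : 0 < n) (x : EuclideanSpace ℝ (Fin n)) :
    0 < otZ η c x :=
  Finset.sum_pos (fun j _ => Real.exp_pos _) (by simpa using Finset.univ_nonempty_iff.2 ⟨⟨0, hn⟩⟩)

lemma otS_nonneg (η : ℝ) (c : Fin n → ℝ) (hn : 0 < n) (x : EuclideanSpace ℝ (Fin n)) (k : Fin n) :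
    0 ≤ otS η c x k :=
  div_nonneg (Real.exp_pos _).le (otZ_pos η c hn x).le

lemma otS_sum (η : ℝ) (c : Fin n → ℝ) (hn : 0 < n) (x : EuclideanSpace ℝ (Fin n)) :
    ∑ k, otS η c x k = 1 := by
  unfold otS
  rw [← Finset.sum_div]
  exact div_self (otZ_pos η c hn x).ne'

/-- derivative of the partition function -/
noncomputable def otZD (η : ℝ) (c : Fin n → ℝ) (x : EuclideanSpace ℝ (Fin n)) :
    EuclideanSpace ℝ (Fin n) →L[ℝ] ℝ :=
  ∑ j, (Real.exp ((x j - c j) / η) / η) • otPj n j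

lemma hasFDerivAt_otExp (η : ℝ) (hη : 0 < η) (c : Fin n → ℝ) (j : Fin n)
    (x : EuclideanSpace ℝ (Fin n)) :
    HasFDerivAt (fun lam : EuclideanSpace ℝ (Fin n) => Real.exp ((lam j - c j) / η))
      ((Real.exp ((x j - c j) / η) / η) • otPj n j) x := by
  have h1 : HasFDerivAt (fun lam : EuclideanSpace ℝ (Fin n) => (lam j - c j) / η)
      (η⁻¹ • otPj n j) x := by
    have h0 := ((η⁻¹ • otPj n j).hasFDerivAt (x := x)).sub_const (c j / η)
    convert h0 using 2 with lam <;> try rfl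
    simp [otPj]
    ring
  have h2 := (Real.hasDerivAt_exp ((x j - c j) / η)).comp_hasFDerivAt x h1
  convert h2 using 1 <;> try rfl
  rw [smul_smul]
  ring_nf

lemma hasFDerivAt_otZ (η : ℝ) (hη : 0 < η) (c : Fin n → ℝ) (x : EuclideanSpace ℝ (Fin n)) :
    HasFDerivAt (otZ η c) (otZD η c x) x := by
  exact HasFDerivAt.fun_sum fun j _ => hasFDerivAt_otExp η hη c j x


/-- the gradient vector of the semi-dual component -/
noncomputable def otG (η : ℝ) (c : Fin n → ℝ) (a : ℝ) (q' : Fin n → ℝ)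
    (x : EuclideanSpace ℝ (Fin n)) : EuclideanSpace ℝ (Fin n) :=
  (EuclideanSpace.equiv (Fin n) ℝ).symm (fun k => a * (otS η c x k - q' k))

lemma otG_apply (η : ℝ) (c : Fin n → ℝ) (a : ℝ) (q' : Fin n → ℝ)
    (x : EuclideanSpace ℝ (Fin n)) (k : Fin n) :
    otG η c a q' x k = a * (otS η c x k - q' k) := rfl

lemma hasGradientAt_phi (η : ℝ) (hη : 0 < η) (hn : 0 < n) (c : Fin n → ℝ) (a b : ℝ)
    (q' : Fin n → ℝ) (x : EuclideanSpace ℝ (Fin n)) :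
    HasGradientAt (fun lam : EuclideanSpace ℝ (Fin n) =>
        a * (-(∑ j, q' j * lam j) - b + η * Real.log (otZ η c lam) + η))
      (otG η c a q' x) x := by
  have hZpos := otZ_pos η c hn x
  -- linear part
  have hLq : HasFDerivAt (fun lam : EuclideanSpace ℝ (Fin n) => ∑ j, q' j * lam j)
      (∑ j, q' j • otPj n j) x := by
    refine HasFDerivAt.fun_sum fun j _ => ?_
    exact ((otPj n j).hasFDerivAt (x := x)).const_mul (q' j)
  -- log part
  have hlog : HasFDerivAt (fun lam => Real.log (otZ η c lam))
      ((otZ η c x)⁻¹ • otZD η c x) x := by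
    have := (Real.hasDerivAt_log hZpos.ne').comp_hasFDerivAt x (hasFDerivAt_otZ η hη c x)
    exact this
  have h := (((hLq.neg.sub_const b).add (hlog.const_mul η)).add_const η).const_mul a
  have h2 := h.hasGradientAt
  have key : (InnerProductSpace.toDual ℝ (EuclideanSpace ℝ (Fin n))) (otG η c a q' x)
      = (a • (-∑ j, q' j • otPj n j + η • (otZ η c x)⁻¹ • otZD η c x)) := by
    ext v
    simp only [InnerProductSpace.toDual_apply_apply, PiLp.inner_apply, RCLike.inner_apply, conj_trivial,
      ContinuousLinearMap.coe_smul', Pi.smul_apply, ContinuousLinearMap.add_apply,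
      ContinuousLinearMap.neg_apply, ContinuousLinearMap.coe_sum', Finset.sum_apply,
      otZD, otG, otS, smul_eq_mul]
    simp only [EuclideanSpace.equiv, PiLp.continuousLinearEquiv_symm_apply, PiLp.toLp_apply,
      otPj, EuclideanSpace.proj, PiLp.proj_apply]
    simp only [Finset.mul_sum, mul_add, mul_neg, neg_mul, ← Finset.sum_neg_distrib,
      ← Finset.sum_add_distrib]
    refine Finset.sum_congr rfl fun k _ => ?_
    have hZ := hZpos.ne'
    field_simp
    ring
  convert h2 using 1 <;> try rfl
  rw [← key, LinearIsometryEquiv.symm_apply_apply]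

/-- derivative of the `k`-th coordinate of the gradient -/
noncomputable def otDk (η : ℝ) (c : Fin n → ℝ) (a : ℝ) (x : EuclideanSpace ℝ (Fin n)) (k : Fin n) :
    EuclideanSpace ℝ (Fin n) →L[ℝ] ℝ :=
  (a * otS η c x k / η) • (otPj n k - ∑ j, otS η c x j • otPj n j)

lemma hasFDerivAt_coord (η : ℝ) (hη : 0 < η) (hn : 0 < n) (c : Fin n → ℝ) (a : ℝ)
    (q' : Fin n → ℝ) (x : EuclideanSpace ℝ (Fin n)) (k : Fin n) :
    HasFDerivAt (fun lam => a * (otS η c lam k - q' k)) (otDk η c a x k) x := by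
  have hZpos := otZ_pos η c hn x
  have hE := hasFDerivAt_otExp η hη c k x
  have hInv := (hasDerivAt_inv hZpos.ne').comp_hasFDerivAt x (hasFDerivAt_otZ η hη c x)
  have hmul := hE.mul hInv
  have h := (hmul.sub_const (q' k)).const_mul a
  have hfun : (fun lam => a * (otS η c lam k - q' k))
      = fun lam => a * (Real.exp ((lam k - c k) / η) * (otZ η c lam)⁻¹ - q' k) := by
    funext lam
    rw [otS, div_eq_mul_inv]
  rw [hfun]
  convert h using 1 <;> try rfl
  ext v
  simp only [otDk, otS, otZD, otPj, ContinuousLinearMap.coe_smul', Pi.smul_apply,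
    ContinuousLinearMap.coe_sub', Pi.sub_apply, ContinuousLinearMap.coe_sum', Finset.sum_apply,
    ContinuousLinearMap.add_apply, smul_eq_mul, EuclideanSpace.proj, PiLp.proj_apply,
    Function.comp_apply, Finset.mul_sum, mul_sub]
  have hZ := hZpos.ne'
  have hη' := hη.ne'
  rw [mul_add, Finset.mul_sum, add_comm, sub_eq_add_neg, ← Finset.sum_neg_distrib]
  congr 1
  · field_simp
  · refine Finset.sum_congr rfl fun j _ => ?_
    field_simp

/-- the full derivative of the gradient map -/
noncomputable def otT (η : ℝ) (c : Fin n → ℝ) (a : ℝ) (x : EuclideanSpace ℝ (Fin n)) :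
    EuclideanSpace ℝ (Fin n) →L[ℝ] EuclideanSpace ℝ (Fin n) :=
  (((EuclideanSpace.equiv (Fin n) ℝ).symm : (Fin n → ℝ) →L[ℝ] EuclideanSpace ℝ (Fin n))).comp
    (ContinuousLinearMap.pi fun k => otDk η c a x k)

lemma hasFDerivAt_otG (η : ℝ) (hη : 0 < η) (hn : 0 < n) (c : Fin n → ℝ) (a : ℝ)
    (q' : Fin n → ℝ) (x : EuclideanSpace ℝ (Fin n)) :
    HasFDerivAt (otG η c a q') (otT η c a x) x := by
  have hpi : HasFDerivAt (fun lam (k : Fin n) => a * (otS η c lam k - q' k))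
      (ContinuousLinearMap.pi fun k => otDk η c a x k) x :=
    hasFDerivAt_pi.2 fun k => hasFDerivAt_coord η hη hn c a q' x k
  exact (((EuclideanSpace.equiv (Fin n) ℝ).symm :
    (Fin n → ℝ) →L[ℝ] EuclideanSpace ℝ (Fin n)).hasFDerivAt).comp x hpi

lemma softmax_quad_le (s v : Fin n → ℝ) (h0 : ∀ k, 0 ≤ s k) (h1 : ∑ k, s k = 1) :
    ∑ k, (s k * (v k - ∑ j, s j * v j)) ^ 2 ≤ ∑ k, v k ^ 2 := by
  set m := ∑ j, s j * v j with hm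
  have hs_le : ∀ k, s k ≤ 1 := fun k => by
    calc s k ≤ ∑ j, s j := Finset.single_le_sum (fun j _ => h0 j) (Finset.mem_univ k)
    _ = 1 := h1
  have step1 : ∑ k, (s k * (v k - m)) ^ 2 ≤ ∑ k, s k * (v k - m) ^ 2 :=
    Finset.sum_le_sum fun k _ => by
      nlinarith [mul_nonneg (mul_nonneg (h0 k) (sub_nonneg.2 (hs_le k))) (sq_nonneg (v k - m))]
  have step2 : ∑ k, s k * (v k - m) ^ 2 = ∑ k, s k * v k ^ 2 - m ^ 2 := by
    have e : ∀ k ∈ Finset.univ, s k * (v k - m) ^ 2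
        = (s k * v k ^ 2 + m ^ 2 * s k) - 2 * m * (s k * v k) := fun k _ => by ring
    rw [Finset.sum_congr rfl e, Finset.sum_sub_distrib, Finset.sum_add_distrib,
      ← Finset.mul_sum, ← Finset.mul_sum, h1, ← hm]
    ring
  have step3 : ∑ k, s k * v k ^ 2 ≤ ∑ k, v k ^ 2 :=
    Finset.sum_le_sum fun k _ => by nlinarith [sq_nonneg (v k), h0 k, hs_le k]
  nlinarith [sq_nonneg m]

lemma otT_apply (η : ℝ) (c : Fin n → ℝ) (a : ℝ) (x v : EuclideanSpace ℝ (Fin n)) (k : Fin n) :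
    otT η c a x v k = a * otS η c x k / η * (v k - ∑ j, otS η c x j * v j) := by
  have hT : otT η c a x v k = otDk η c a x k v := rfl
  rw [hT]
  simp only [otDk, ContinuousLinearMap.coe_smul', Pi.smul_apply, ContinuousLinearMap.coe_sub',
    Pi.sub_apply, ContinuousLinearMap.coe_sum', Finset.sum_apply, otPj, EuclideanSpace.proj,
    PiLp.proj_apply, smul_eq_mul, mul_sub, Finset.mul_sum]

lemma otT_norm_le (η : ℝ) (hη : 0 < η) (hn : 0 < n) (c : Fin n → ℝ) (a : ℝ) (ha : 0 ≤ a)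
    (x : EuclideanSpace ℝ (Fin n)) : ‖otT η c a x‖ ≤ a / η := by
  refine ContinuousLinearMap.opNorm_le_bound _ (div_nonneg ha hη.le) fun v => ?_
  set m := ∑ j, otS η c x j * v j with hm
  have h1 : ‖otT η c a x v‖
      = Real.sqrt (∑ k, (a / η) ^ 2 * (otS η c x k * (v k - m)) ^ 2) := by
    rw [EuclideanSpace.norm_eq]
    congr 1
    refine Finset.sum_congr rfl fun k _ => ?_
    rw [otT_apply, Real.norm_eq_abs, sq_abs, ← hm]
    ring
  rw [h1, ← Finset.mul_sum, Real.sqrt_mul (sq_nonneg _), Real.sqrt_sq (div_nonneg ha hη.le)]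
  have h2 : Real.sqrt (∑ k, (otS η c x k * (v k - m)) ^ 2) ≤ ‖v‖ := by
    rw [EuclideanSpace.norm_eq]
    apply Real.sqrt_le_sqrt
    have := softmax_quad_le (otS η c x) (fun k => v k) (otS_nonneg η c hn x) (otS_sum η c hn x)
    simpa [Real.norm_eq_abs, sq_abs] using this
  exact mul_le_mul_of_nonneg_left h2 (div_nonneg ha hη.le)

end OTAux

/-- The `i`-th semi-dual component of entropy-regularized optimal transport:
`φ_i(λ) = n p'_i ( −⟨q', λ⟩ − η log p'_i + η log( Σ_j exp((λ_j − C_{ij} − η)/η) ) + η )`. -/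
noncomputable def otSemiDualComponent (n : ℕ) (η : ℝ) (C : Fin n → Fin n → ℝ)
    (p' q' : Fin n → ℝ) (i : Fin n) (lam : EuclideanSpace ℝ (Fin n)) : ℝ :=
  n * p' i * (-(∑ j, q' j * lam j) - η * Real.log (p' i)
    + η * Real.log (∑ j, Real.exp ((lam j - C i j - η) / η)) + η)

/-- each semi-dual component `φ_i` is `(n p'_i / η)`-smooth w.r.t. the
Euclidean norm: `‖∇φ_i(λ) − ∇φ_i(λ')‖₂ ≤ (n p'_i / η) ‖λ − λ'‖₂`. -/
theorem otSemiDualComponent_smooth_l2 (n : ℕ) (hn : 1 ≤ n) (η : ℝ) (hη : 0 < η)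
    (C : Fin n → Fin n → ℝ) (p' q' : Fin n → ℝ)
    (hp_pos : ∀ i, 0 < p' i) (hq_nonneg : ∀ j, 0 ≤ q' j)
    (hp_sum : ∑ i, p' i = 1) (hq_sum : ∑ j, q' j = 1) :
    ∀ (i : Fin n) (lam lam' : EuclideanSpace ℝ (Fin n)),
      ‖gradient (otSemiDualComponent n η C p' q' i) lam
          - gradient (otSemiDualComponent n η C p' q' i) lam'‖
        ≤ (n * p' i / η) * ‖lam - lam'‖ := by
  intro i lam lam'
  have hn0 : 0 < n := hn
  set a : ℝ := (n : ℝ) * p' i with ha_def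
  have ha : 0 ≤ a := mul_nonneg (Nat.cast_nonneg n) (hp_pos i).le
  set c : Fin n → ℝ := fun j => C i j + η with hc_def
  -- rewrite φ in the standard form
  have hφ : otSemiDualComponent n η C p' q' i = fun lam : EuclideanSpace ℝ (Fin n) =>
      a * (-(∑ j, q' j * lam j) - η * Real.log (p' i) + η * Real.log (otZ η c lam) + η) := by
    funext y
    unfold otSemiDualComponent otZ
    simp only [hc_def, sub_sub, ha_def]
  -- gradient identification
  have hgrad : ∀ x, gradient (otSemiDualComponent n η C p' q' i) x = otG η c a q' x := by
    intro x
    rw [hφ]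
    exact (hasGradientAt_phi η hη hn0 c a (η * Real.log (p' i)) q' x).gradient
  rw [hgrad lam, hgrad lam']
  have key := Convex.norm_image_sub_le_of_norm_hasFDerivWithin_le
    (f := otG η c a q') (f' := fun x => otT η c a x) (s := Set.univ) (C := a / η)
    (fun x _ => (hasFDerivAt_otG η hη hn0 c a q' x).hasFDerivWithinAt)
    (fun x _ => otT_norm_le η hη hn0 c a ha x)
    convex_univ (Set.mem_univ lam') (Set.mem_univ lam)
  simpa [ha_def, div_eq_mul_inv] using key
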